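/- arXiv:2109.13646 — 2 statements merged into one kernel-verified Lean document; each statement's English description precedes it below -/
import Mathlib

section
/- For any w ∈ S_n, the recording tableau of w equals the insertion tableau of the inverse: Q(w) = P(w⁻¹), and consequently P(w) = Q(w⁻¹). -/
/-- `l` is (the list of parts of) a partition of `n`. -/
def IsPartitionList (n : ℕ) (l : List ℕ) : Prop :=
  l.Chain' (· ≥ ·) ∧ (∀ a ∈ l, 0 < a) ∧ l.sum = n

/-- dominance order on lists of parts, via partial sums. -/
def listDom (a b : List ℕ) : Prop := ∀ i, (b.take i).sum ≤ (a.take i).sum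

/-- number of parts of `l` that are `> c`, i.e. the `(c+1)`-st part of the conjugate. -/
def conjCount (l : List ℕ) (c : ℕ) : ℕ := (l.filter (fun a => c < a)).length

/-- the conjugate partition, as a list. -/
def conjP (l : List ℕ) : List ℕ := (List.range (l.headD 0)).map (conjCount l)

/-- shape of a tableau given as a list of rows. -/
def shape (t : List (List ℕ)) : List ℕ := t.map List.length

/-- `t` is a standard Young tableau with `n` boxes and entries `1,…,n`. -/
def IsStdTableau (n : ℕ) (t : List (List ℕ)) : Prop :=
  t.flatten.Perm ((List.range n).map (· + 1)) ∧
  (∀ r ∈ t, r.Chain' (· < ·)) ∧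
  (∀ i j, j < (t.getD (i + 1) []).length →
      (t.getD i []).getD j 0 < (t.getD (i + 1) []).getD j 0) ∧
  (shape t).Chain' (· ≥ ·) ∧ (∀ r ∈ t, r ≠ [])

/-- the subtableau `t↓ₘ` consisting of the entries `1,…,m`. -/
def restrictTab (t : List (List ℕ)) (m : ℕ) : List (List ℕ) :=
  (t.map (fun r => r.filter (· ≤ m))).filter (fun r => ¬ r = [])

/-- dominance order on standard tableaux with `n` boxes:
`s ⊵ t` iff `Shape(s↓ₖ) ⊵ Shape(t↓ₖ)` for all `1 ≤ k ≤ n`. -/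
def tabDom (n : ℕ) (s t : List (List ℕ)) : Prop :=
  ∀ k, 1 ≤ k → k ≤ n → listDom (shape (restrictTab s k)) (shape (restrictTab t k))

def rowTabAux : ℕ → List ℕ → List (List ℕ)
  | _, [] => []
  | s, a :: as => ((List.range a).map (fun j => s + j + 1)) :: rowTabAux (s + a) as

/-- the initial (row-reading) tableau `t^λ`. -/
def rowTab (l : List ℕ) : List (List ℕ) := rowTabAux 0 l

/-- the column-reading tableau `t_λ`. -/
def colTab (l : List ℕ) : List (List ℕ) :=
  (List.range l.length).map (fun i =>
    (List.range (l.getD i 0)).map (fun j =>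
      ((List.range j).map (conjCount l)).sum + i + 1))

/-- the conjugate (transpose) tableau `t*`. -/
def conjTab (t : List (List ℕ)) : List (List ℕ) :=
  (List.range (t.headD []).length).map (fun j => t.filterMap (fun r => r[j]?))

/-- Schensted insertion of `x` into a row: new row plus optionally bumped entry. -/
def rowInsert : List ℕ → ℕ → List ℕ × Option ℕ
  | [], x => ([x], none)
  | a :: as, x =>
    if a < x then
      let p := rowInsert as x
      (a :: p.1, p.2)
    else (x :: as, some a)

/-- Schensted row-insertion of `x` into a tableau. -/
def insertTab : List (List ℕ) → ℕ → List (List ℕ)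
  | [], x => [[x]]
  | r :: rest, x =>
    match rowInsert r x with
    | (r', none) => r' :: rest
    | (r', some y) => r' :: insertTab rest y

/-- place the entry `k` at the end of row `r` of `q`. -/
def placeAt : List (List ℕ) → ℕ → ℕ → List (List ℕ)
  | [], _, k => [[k]]
  | q :: qs, 0, k => (q ++ [k]) :: qs
  | q :: qs, r + 1, k => q :: placeAt qs r k

/-- index of the row in which the two shapes differ. -/
def diffRow : List ℕ → List ℕ → ℕ
  | _, [] => 0
  | [], _ :: _ => 0
  | a :: as, b :: bs => if a = b then diffRow as bs + 1 else 0

/-- one step of RSK: insert `x` into `P` and record `k` in `Q`. -/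
def RSKstep (pq : List (List ℕ) × List (List ℕ)) (x k : ℕ) :
    List (List ℕ) × List (List ℕ) :=
  let P' := insertTab pq.1 x
  (P', placeAt pq.2 (diffRow (shape pq.1) (shape P')) k)

/-- RSK applied to the sequence `xs` (with recording entries `1, 2, …`). -/
def RSKfold (xs : List ℕ) : List (List ℕ) × List (List ℕ) :=
  (xs.zip (List.range xs.length)).foldl (fun pq p => RSKstep pq p.1 (p.2 + 1)) ([], [])

/-- the RSK insertion tableau `P(w)`. -/
def Ptab {n : ℕ} (w : Equiv.Perm (Fin n)) : List (List ℕ) :=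
  (RSKfold (List.ofFn (fun i => (w i : ℕ) + 1))).1

/-- the RSK recording tableau `Q(w)`. -/
def Qtab {n : ℕ} (w : Equiv.Perm (Fin n)) : List (List ℕ) :=
  (RSKfold (List.ofFn (fun i => (w i : ℕ) + 1))).2

/-- Coxeter length of a permutation = number of inversions. -/
def invCount {n : ℕ} (w : Equiv.Perm (Fin n)) : ℕ :=
  (Finset.univ.filter (fun p : Fin n × Fin n => p.1 < p.2 ∧ w p.2 < w p.1)).card

/-- one step in the Bruhat order: multiply by a reflection, increasing length. -/
def bruhatStep {n : ℕ} (x y : Equiv.Perm (Fin n)) : Prop :=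
  (∃ i j : Fin n, i ≠ j ∧ y = x * Equiv.swap i j) ∧ invCount x < invCount y

/-- strict Bruhat order. -/
def bruhatLT {n : ℕ} (x y : Equiv.Perm (Fin n)) : Prop :=
  Relation.TransGen bruhatStep x y


/-! ### Auxiliary development for the RSK symmetry theorem -/

section RSKsym

abbrev BW := List (ℕ × ℕ)

/-- max of a list of naturals -/
def maxL (l : List ℕ) : ℕ := l.foldr max 0

lemma le_maxL {l : List ℕ} {x : ℕ} (h : x ∈ l) : x ≤ maxL l := by
  induction l with
  | nil => cases h
  | cons a t ih =>
    rcases List.mem_cons.1 h with rfl | h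
    · exact le_max_left _ _
    · exact (ih h).trans (le_max_right _ _)

lemma maxL_le {l : List ℕ} {m : ℕ} (h : ∀ x ∈ l, x ≤ m) : maxL l ≤ m := by
  induction l with
  | nil => exact Nat.zero_le m
  | cons a t ih =>
    exact max_le (h a (List.mem_cons_self)) (ih fun x hx => h x (List.mem_cons_of_mem _ hx))

lemma maxL_mem {l : List ℕ} (h : 0 < maxL l) : maxL l ∈ l := by
  induction l with
  | nil => simp [maxL] at h
  | cons a t ih =>
    have hc : maxL (a :: t) = max a (maxL t) := rfl
    rcases Nat.le_total (maxL t) a with hle | hle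
    · rw [hc, max_eq_left hle]; exact List.mem_cons_self
    · rw [hc, max_eq_right hle]
      rw [hc, max_eq_right hle] at h
      exact List.mem_cons_of_mem _ (ih h)

lemma maxL_perm {l₁ l₂ : List ℕ} (h : l₁.Perm l₂) : maxL l₁ = maxL l₂ :=
  le_antisymm (maxL_le fun x hx => le_maxL (h.mem_iff.1 hx))
    (maxL_le fun x hx => le_maxL (h.mem_iff.2 hx))

/-- min of a list of naturals (junk value `maxL l` for `[]`). -/
def minL (l : List ℕ) : ℕ := l.foldr min (maxL l)

lemma minL_le {l : List ℕ} {x : ℕ} (h : x ∈ l) : minL l ≤ x := by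
  have : ∀ s : ℕ, l.foldr min s ≤ x := by
    intro s
    induction l with
    | nil => cases h
    | cons a t ih =>
      rcases List.mem_cons.1 h with rfl | h
      · exact min_le_left _ _
      · exact le_trans (min_le_right _ _) (ih h)
  exact this _
  
lemma foldr_min_mem (l : List ℕ) (s : ℕ) : l.foldr min s ∈ l ∨ l.foldr min s = s := by
  induction l with
  | nil => exact Or.inr rfl
  | cons a t ih =>
    show min a (t.foldr min s) ∈ a :: t ∨ _
    rcases Nat.le_total a (t.foldr min s) with hle | hle
    · rw [min_eq_left hle]; exact Or.inl (List.mem_cons_self)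
    · rw [min_eq_right hle]
      rcases ih with h | h
      · exact Or.inl (List.mem_cons_of_mem _ h)
      · exact Or.inr (by rw [List.foldr_cons, min_eq_right hle, h])

lemma minL_mem {l : List ℕ} (h : l ≠ []) : minL l ∈ l := by
  rcases foldr_min_mem l (maxL l) with hm | hm
  · exact hm
  · rw [minL, hm]
    rcases Nat.eq_zero_or_pos (maxL l) with h0 | h0
    · cases l with
      | nil => exact absurd rfl h
      | cons a t =>
        have : a ≤ maxL (a :: t) := le_maxL (List.mem_cons_self)
        rw [h0]; rw [h0] at this
        have : a = 0 := Nat.le_zero.1 this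
        rw [← this]; exact List.mem_cons_self
    · exact maxL_mem h0

lemma le_minL {l : List ℕ} {m : ℕ} (hne : l ≠ []) (h : ∀ x ∈ l, m ≤ x) : m ≤ minL l :=
  h _ (minL_mem hne)

lemma minL_perm {l₁ l₂ : List ℕ} (h : l₁.Perm l₂) (hne : l₁ ≠ []) : minL l₁ = minL l₂ := by
  have hne2 : l₂ ≠ [] := by
    intro h2; rw [h2] at h; exact hne h.eq_nil
  exact le_antisymm (minL_le (h.mem_iff.2 (minL_mem hne2)))
    (minL_le (h.mem_iff.1 (minL_mem hne)))

lemma minL_append_right {l : List ℕ} {a : ℕ} (h : ∀ x ∈ l, a ≤ x) :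
    minL (l ++ [a]) = a := by
  refine le_antisymm (minL_le (by simp)) (le_minL (by simp) ?_)
  intro x hx
  rcases List.mem_append.1 hx with hx | hx
  · exact h x hx
  · simp at hx; omega

lemma minL_append_left {l : List ℕ} {a : ℕ} (hne : l ≠ []) (h : minL l ≤ a) :
    minL (l ++ [a]) = minL l := by
  refine le_antisymm (minL_le (List.mem_append_left _ (minL_mem hne))) (le_minL (by simp) ?_)
  intro x hx
  rcases List.mem_append.1 hx with hx | hx
  · exact minL_le hx
  · simp at hx; omega

/-- pairs strictly dominated by `p` -/
def domBelow (S : BW) (p : ℕ × ℕ) : BW :=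
  S.filter (fun q => decide (q.1 < p.1) && decide (q.2 < p.2))

lemma mem_domBelow {S : BW} {p q : ℕ × ℕ} :
    q ∈ domBelow S p ↔ q ∈ S ∧ q.1 < p.1 ∧ q.2 < p.2 := by
  simp [domBelow]

/-- length of the longest chain (componentwise strictly increasing) of elements of `S`
ending strictly below `p`, plus one; i.e. the "class" of `p` relative to `S`. -/
def cls (S : BW) (p : ℕ × ℕ) : ℕ :=
  1 + maxL ((domBelow S p).attach.map (fun q => cls S q.1))
termination_by p.1
decreasing_by
  exact (mem_domBelow.1 q.2).2.1

lemma cls_def (S : BW) (p : ℕ × ℕ) :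
    cls S p = 1 + maxL ((domBelow S p).map (cls S)) := by
  rw [cls]
  congr 1
  apply maxL_perm
  rw [List.attach_map_val]

lemma cls_pos (S : BW) (p : ℕ × ℕ) : 0 < cls S p := by
  rw [cls_def]; omega


lemma cls_lt_of_dom {S : BW} {p q : ℕ × ℕ} (hq : q ∈ S) (h1 : q.1 < p.1) (h2 : q.2 < p.2) :
    cls S q < cls S p := by
  rw [cls_def S p]
  have : cls S q ∈ (domBelow S p).map (cls S) :=
    List.mem_map_of_mem (mem_domBelow.2 ⟨hq, h1, h2⟩)
  have := le_maxL this
  omega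

/-- classes only depend on dominated-sets below the point -/
lemma cls_congr {S₁ S₂ : BW} :
    ∀ (p : ℕ × ℕ), (∀ r : ℕ × ℕ, r.1 ≤ p.1 → domBelow S₁ r = domBelow S₂ r) →
    cls S₁ p = cls S₂ p := by
  intro p
  obtain ⟨a, b⟩ := p
  induction a using Nat.strong_induction_on generalizing b with
  | _ a ih =>
    intro h
    rw [cls_def, cls_def, h (a, b) le_rfl]
    congr 1
    apply maxL_perm
    apply List.Perm.of_eq
    apply List.map_congr_left
    intro q hq
    have hq' := mem_domBelow.1 hq
    exact ih q.1 hq'.2.1 q.2 (fun r hr => h r (le_of_lt (lt_of_le_of_lt hr hq'.2.1)))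

lemma domBelow_append {S : BW} {p r : ℕ × ℕ} (hp : ¬ p.1 < r.1) :
    domBelow (S ++ [p]) r = domBelow S r := by
  rw [domBelow, List.filter_append]
  simp [domBelow, hp]

/-- appending an element with larger first coordinate does not change classes of old points -/
lemma cls_append {S : BW} {p q : ℕ × ℕ} (hpq : q.1 < p.1) :
    cls (S ++ [p]) q = cls S q := by
  apply cls_congr
  intro r hr
  exact domBelow_append (by omega)

lemma cls_perm {S₁ S₂ : BW} (hperm : S₁.Perm S₂) (p : ℕ × ℕ) : cls S₁ p = cls S₂ p := by
  obtain ⟨a, b⟩ := p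
  induction a using Nat.strong_induction_on generalizing b with
  | _ a ih =>
    rw [cls_def, cls_def]
    congr 1
    apply maxL_perm
    have hfp : (domBelow S₁ (a, b)).Perm (domBelow S₂ (a, b)) := hperm.filter _
    have h1 : (domBelow S₁ (a, b)).map (cls S₁)
        = (domBelow S₁ (a, b)).map (cls S₂) := by
      apply List.map_congr_left
      intro q hq
      exact ih q.1 (mem_domBelow.1 hq).2.1 q.2
    rw [h1]
    exact hfp.map _

lemma domBelow_swap (S : BW) (p : ℕ × ℕ) :
    domBelow (S.map Prod.swap) (Prod.swap p) = (domBelow S p).map Prod.swap := by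
  rw [domBelow, List.filter_map, domBelow]
  congr 1
  apply List.filter_congr
  intro q _
  simp [Prod.swap, Bool.and_comm]

lemma cls_swapmap (S : BW) (p : ℕ × ℕ) :
    cls (S.map Prod.swap) (Prod.swap p) = cls S p := by
  obtain ⟨a, b⟩ := p
  induction b using Nat.strong_induction_on generalizing a with
  | _ b ih =>
    rw [cls_def, cls_def, domBelow_swap, List.map_map]
    congr 1
    apply maxL_perm
    apply List.Perm.of_eq
    apply List.map_congr_left
    intro q hq
    have hq' := mem_domBelow.1 hq
    exact ih q.2 hq'.2.2 q.1

/-- descent: attainment of the max in the definition of `cls` -/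
lemma cls_descent {S : BW} {p : ℕ × ℕ} (h : 2 ≤ cls S p) :
    ∃ q ∈ S, q.1 < p.1 ∧ q.2 < p.2 ∧ cls S q + 1 = cls S p := by
  rw [cls_def] at h ⊢
  have hpos : 0 < maxL ((domBelow S p).map (cls S)) := by omega
  have hmem := maxL_mem hpos
  rcases List.mem_map.1 hmem with ⟨q, hq, hq2⟩
  have hq' := mem_domBelow.1 hq
  exact ⟨q, hq'.1, hq'.2.1, hq'.2.2, by omega⟩

lemma cls_exists_below {S : BW} :
    ∀ (c : ℕ) (p : ℕ × ℕ), cls S p = c →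
    ∀ s, 1 ≤ s → s < c → ∃ q ∈ S, q.1 < p.1 ∧ q.2 < p.2 ∧ cls S q = s := by
  intro c
  induction c using Nat.strong_induction_on with
  | _ c ihc =>
    intro p hc s hs1 hs2
    obtain ⟨q, hqS, hq1, hq2, hq3⟩ := cls_descent (S := S) (p := p) (by omega)
    rcases Nat.lt_or_ge s (cls S q) with hlt | hge
    · obtain ⟨r, hrS, hr1, hr2, hr3⟩ := ihc (cls S q) (by omega) q rfl s hs1 hlt
      exact ⟨r, hrS, by omega, by omega, hr3⟩
    · have : s = cls S q := by omega
      exact ⟨q, hqS, hq1, hq2, this.symm⟩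

/-- all elements of the class `t` of `S` -/
def classList (S : BW) (t : ℕ) : BW := S.filter (fun p => decide (cls S p = t))

lemma mem_classList {S : BW} {t : ℕ} {p : ℕ × ℕ} :
    p ∈ classList S t ↔ p ∈ S ∧ cls S p = t := by simp [classList]

def Tmax (S : BW) : ℕ := maxL (S.map (cls S))

def minvC (S : BW) (t : ℕ) : ℕ := minL ((classList S t).map Prod.snd)
def minqC (S : BW) (t : ℕ) : ℕ := minL ((classList S t).map Prod.fst)

def row1 (S : BW) : List ℕ := (List.range (Tmax S)).map (fun i => minvC S (i + 1))
def qrow1 (S : BW) : List ℕ := (List.range (Tmax S)).map (fun i => minqC S (i + 1))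

def earlier (S : BW) (p : ℕ × ℕ) : BW :=
  S.filter (fun q => decide (cls S q = cls S p) && decide (q.1 < p.1))

lemma mem_earlier {S : BW} {p q : ℕ × ℕ} :
    q ∈ earlier S p ↔ q ∈ S ∧ cls S q = cls S p ∧ q.1 < p.1 := by simp [earlier]

def bumpF (S : BW) (p : ℕ × ℕ) : Option (ℕ × ℕ) :=
  if earlier S p = [] then none else some (p.1, minL ((earlier S p).map Prod.snd))

def bumpL (S : BW) : BW := S.filterMap (bumpF S)

/-- hypothesis: first coordinates strictly increasing -/
def P1 (S : BW) : Prop := S.Pairwise (fun a b => a.1 < b.1)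
/-- hypothesis: second coordinates distinct -/
def P2 (S : BW) : Prop := S.Pairwise (fun a b => a.2 ≠ b.2)

lemma P1.fst_ne {S : BW} (h : P1 S) {p q : ℕ × ℕ} (hp : p ∈ S) (hq : q ∈ S)
    (hne : p ≠ q) : p.1 ≠ q.1 := by
  haveI : Std.Symm (fun a b : ℕ × ℕ => a.1 ≠ b.1) := ⟨fun a b hab => Ne.symm hab⟩
  have := List.Pairwise.forall (l := S) (R := fun a b => a.1 ≠ b.1)
    (h.imp (fun hab => Nat.ne_of_lt hab)) hp hq hne
  exact this

lemma P2.snd_ne {S : BW} (h : P2 S) {p q : ℕ × ℕ} (hp : p ∈ S) (hq : q ∈ S)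
    (hne : p ≠ q) : p.2 ≠ q.2 :=
  haveI : Std.Symm (fun a b : ℕ × ℕ => a.2 ≠ b.2) := ⟨fun a b hab => Ne.symm hab⟩
  List.Pairwise.forall (R := fun a b : ℕ × ℕ => a.2 ≠ b.2) h hp hq hne

lemma P1.eq_of_fst {S : BW} (h : P1 S) {p q : ℕ × ℕ} (hp : p ∈ S) (hq : q ∈ S)
    (heq : p.1 = q.1) : p = q := by
  by_contra hne
  exact h.fst_ne hp hq hne heq

lemma P2.eq_of_snd {S : BW} (h : P2 S) {p q : ℕ × ℕ} (hp : p ∈ S) (hq : q ∈ S)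
    (heq : p.2 = q.2) : p = q := by
  by_contra hne
  exact h.snd_ne hp hq hne heq

/-- within one class, values strictly decrease as first coordinates increase -/
lemma class_antitone {S : BW} (h2 : P2 S) {p q : ℕ × ℕ} (hp : p ∈ S) (hq : q ∈ S)
    (hcls : cls S p = cls S q) (h1 : p.1 < q.1) : q.2 < p.2 := by
  rcases Nat.lt_trichotomy q.2 p.2 with h | h | h
  · exact h
  · exact absurd (h2.eq_of_snd hq hp h) (by intro he; rw [he] at h1; omega)
  · have := cls_lt_of_dom hp h1 h
    omega


lemma minL_singleton (a : ℕ) : minL [a] = a := by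
  simp [minL, maxL]

lemma maxL_append (l₁ l₂ : List ℕ) : maxL (l₁ ++ l₂) = max (maxL l₁) (maxL l₂) := by
  induction l₁ with
  | nil => simp [maxL]
  | cons a t ih =>
    show max a (maxL (t ++ l₂)) = max (max a (maxL t)) (maxL l₂)
    rw [ih, max_assoc]

lemma cls_le_Tmax {S : BW} {q : ℕ × ℕ} (h : q ∈ S) : cls S q ≤ Tmax S :=
  le_maxL (List.mem_map_of_mem h)

lemma class_nonempty {S : BW} {s : ℕ} (h1 : 1 ≤ s) (h2 : s ≤ Tmax S) :
    ∃ q ∈ S, cls S q = s := by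
  have hpos : 0 < maxL (S.map (cls S)) := h2.trans_lt' (by omega)
  have := maxL_mem hpos
  rcases List.mem_map.1 this with ⟨q₀, hq₀, hcq₀⟩
  have hq0T : cls S q₀ = Tmax S := hcq₀
  rcases Nat.lt_or_ge s (Tmax S) with hlt | hge
  · obtain ⟨q, hq, _, _, hc⟩ := cls_exists_below (S := S) (Tmax S) q₀ hq0T s h1 hlt
    exact ⟨q, hq, hc⟩
  · exact ⟨q₀, hq₀, by omega⟩

lemma range_split {t T : ℕ} (h1 : 1 ≤ t) (h2 : t ≤ T) :
    List.range T = List.range (t - 1) ++ (t - 1) :: List.range' t (T - t) := by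
  rw [List.range_eq_range', List.range_eq_range']
  have e0 : t - 1 + 1 = t := by omega
  have e1 : List.range' (t - 1) (T - t + 1) = (t - 1) :: List.range' t (T - t) := by
    rw [List.range'_succ, e0]
  rw [← e1]
  have e2 : List.range' 0 (t - 1) ++ List.range' (0 + (t - 1)) (T - t + 1)
      = List.range' 0 ((T - t + 1) + (t - 1)) := by
    rw [List.range'_append_1 (s := 0) (m := t - 1) (n := T - t + 1), Nat.add_comm]
  rw [Nat.zero_add] at e2
  rw [e2, show (T - t + 1) + (t - 1) = T by omega]

lemma rowInsert_spec_none (A : List ℕ) (x : ℕ) (hA : ∀ a ∈ A, a < x) :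
    rowInsert A x = (A ++ [x], none) := by
  induction A with
  | nil => rfl
  | cons a t ih =>
    have ha : a < x := hA a (List.mem_cons_self)
    rw [rowInsert]
    simp only [if_pos ha]
    rw [ih (fun b hb => hA b (List.mem_cons_of_mem _ hb))]
    rfl

lemma rowInsert_spec_some (A B : List ℕ) (x b : ℕ) (hA : ∀ a ∈ A, a < x) (hb : ¬ b < x) :
    rowInsert (A ++ b :: B) x = (A ++ x :: B, some b) := by
  induction A with
  | nil =>
    show rowInsert (b :: B) x = _
    rw [rowInsert]
    simp only [if_neg hb]
    rfl
  | cons a t ih =>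
    have ha : a < x := hA a (List.mem_cons_self)
    show rowInsert (a :: (t ++ b :: B)) x = _
    rw [rowInsert]
    simp only [if_pos ha]
    rw [ih (fun c hc => hA c (List.mem_cons_of_mem _ hc))]
    rfl

/-- one step of the first-row pass -/
def rstep (s : List ℕ × List ℕ × BW) (p : ℕ × ℕ) : List ℕ × List ℕ × BW :=
  match rowInsert s.1 p.2 with
  | (r', none) => (r', s.2.1 ++ [p.1], s.2.2)
  | (r', some y) => (r', s.2.1, s.2.2 ++ [(p.1, y)])

def rowPass (S : BW) : List ℕ × List ℕ × BW := S.foldl rstep ([], [], [])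


section AppendStep

variable {S : BW} {p : ℕ × ℕ}

lemma classList_append (hlt : ∀ q ∈ S, q.1 < p.1) (t : ℕ) :
    classList (S ++ [p]) t
      = classList S t ++ (if cls (S ++ [p]) p = t then [p] else []) := by
  rw [classList, List.filter_append]
  congr 1
  · apply List.filter_congr
    intro q hq
    simp [cls_append (hlt q hq)]
  · by_cases h : cls (S ++ [p]) p = t <;> simp [h]

lemma Tmax_append (hlt : ∀ q ∈ S, q.1 < p.1) :
    Tmax (S ++ [p]) = max (Tmax S) (cls (S ++ [p]) p) := by
  rw [Tmax, List.map_append, maxL_append]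
  have e1 : List.map (cls (S ++ [p])) S = List.map (cls S) S := by
    apply List.map_congr_left
    intro q hq
    exact cls_append (hlt q hq)
  rw [e1]
  have e2 : maxL (List.map (cls (S ++ [p])) [p]) = cls (S ++ [p]) p := by
    simp [maxL]
  rw [e2]
  rfl

lemma cls_new_le (hlt : ∀ q ∈ S, q.1 < p.1) : cls (S ++ [p]) p ≤ Tmax S + 1 := by
  rw [cls_def]
  have hdb : domBelow (S ++ [p]) p = domBelow S p := domBelow_append (by omega)
  rw [hdb]
  have : maxL ((domBelow S p).map (cls (S ++ [p]))) ≤ Tmax S := by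
    apply maxL_le
    intro x hx
    rcases List.mem_map.1 hx with ⟨q, hq, rfl⟩
    have hqS : q ∈ S := (mem_domBelow.1 hq).1
    rw [cls_append (hlt q hqS)]
    exact cls_le_Tmax hqS
  omega

lemma earlier_append (hlt : ∀ q ∈ S, q.1 < p.1) {q : ℕ × ℕ} (hq : q ∈ S) :
    earlier (S ++ [p]) q = earlier S q := by
  rw [earlier, List.filter_append]
  have e1 : List.filter (fun r => decide (cls (S ++ [p]) r = cls (S ++ [p]) q)
      && decide (r.1 < q.1)) [p] = [] := by
    simp only [List.filter, decide_eq_true_eq]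
    have : ¬ p.1 < q.1 := by have := hlt q hq; omega
    simp [this]
  rw [e1, List.append_nil]
  apply List.filter_congr
  intro r hr
  simp [cls_append (hlt r hr), cls_append (hlt q hq)]

lemma bumpF_append (hlt : ∀ q ∈ S, q.1 < p.1) {q : ℕ × ℕ} (hq : q ∈ S) :
    bumpF (S ++ [p]) q = bumpF S q := by
  rw [bumpF, bumpF, earlier_append hlt hq]

end AppendStep

theorem rowPass_eq : ∀ (S : BW), P1 S → P2 S →
    rowPass S = (row1 S, qrow1 S, bumpL S) := by
  intro S
  induction S using List.reverseRecOn with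
  | nil =>
    intro _ _
    simp [rowPass, row1, qrow1, bumpL, Tmax, maxL]
  | append_singleton S p ih =>
    intro h1' h2'
    have hlt : ∀ q ∈ S, q.1 < p.1 := fun q hq =>
      (List.pairwise_append.1 h1').2.2 q hq p (List.mem_singleton_self p)
    have h1 : P1 S := h1'.sublist (List.sublist_append_left _ _)
    have h2 : P2 S := h2'.sublist (List.sublist_append_left _ _)
    have hfold : rowPass (S ++ [p]) = rstep (rowPass S) p := by
      rw [rowPass, List.foldl_append]
      rfl
    rw [hfold, ih h1 h2]
    have ht1 : 1 ≤ cls (S ++ [p]) p := cls_pos _ _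
    have ht2 : cls (S ++ [p]) p ≤ Tmax S + 1 := cls_new_le hlt
    -- values in earlier classes are smaller
    have F3 : ∀ s, 1 ≤ s → s < cls (S ++ [p]) p → minvC S s < p.2 := by
      intro s hs hst
      obtain ⟨q, hq, hq1, hq2, hc⟩ :=
        cls_exists_below (S := S ++ [p]) (cls (S ++ [p]) p) p rfl s hs hst
      have hqS : q ∈ S := by
        rcases List.mem_append.1 hq with h | h
        · exact h
        · simp at h; subst h; omega
      have hcq : cls S q = s := by rw [← cls_append (hlt q hqS)]; exact hc
      have hmem : q.2 ∈ (classList S s).map Prod.snd :=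
        List.mem_map_of_mem (mem_classList.2 ⟨hqS, hcq⟩)
      exact lt_of_le_of_lt (minL_le hmem) hq2
    -- values in the same class are larger
    have F4 : ∀ q ∈ S, cls S q = cls (S ++ [p]) p → p.2 < q.2 := by
      intro q hq hcq
      have hq' : q ∈ S ++ [p] := List.mem_append_left _ hq
      have hp' : p ∈ S ++ [p] := List.mem_append_right _ (List.mem_singleton_self p)
      have : cls (S ++ [p]) q = cls (S ++ [p]) p := by
        rw [cls_append (hlt q hq)]; exact hcq
      exact class_antitone h2' hq' hp' this (hlt q hq)
    -- stability of min-statistics in other classes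
    have hmvc : ∀ s, s ≠ cls (S ++ [p]) p →
        minvC (S ++ [p]) s = minvC S s ∧ minqC (S ++ [p]) s = minqC S s := by
      intro s hs
      rw [minvC, minqC, classList_append hlt, if_neg (fun h => hs h.symm), List.append_nil]
      exact ⟨rfl, rfl⟩
    by_cases hcase : cls (S ++ [p]) p ≤ Tmax S
    · -- the new element bumps the previous minimum of its class
      have hne : classList S (cls (S ++ [p]) p) ≠ [] := by
        obtain ⟨q, hq, hc⟩ := class_nonempty ht1 hcase
        intro hnil
        have : q ∈ classList S (cls (S ++ [p]) p) := mem_classList.2 ⟨hq, hc⟩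
        rw [hnil] at this
        exact absurd this (List.not_mem_nil)
      have hnem : (classList S (cls (S ++ [p]) p)).map Prod.snd ≠ [] := by
        intro h
        exact hne (List.map_eq_nil_iff.1 h)
      have hmid : p.2 < minvC S (cls (S ++ [p]) p) := by
        have hm := minL_mem hnem
        rcases List.mem_map.1 hm with ⟨q₀, hq₀, hq₀2⟩
        have := F4 q₀ (mem_classList.1 hq₀).1 (mem_classList.1 hq₀).2
        rw [minvC, ← hq₀2]
        exact this
      have hsplit : row1 S
          = (List.range (cls (S ++ [p]) p - 1)).map (fun i => minvC S (i + 1))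
            ++ minvC S (cls (S ++ [p]) p - 1 + 1)
            :: (List.range' (cls (S ++ [p]) p) (Tmax S - cls (S ++ [p]) p)).map
                 (fun i => minvC S (i + 1)) := by
        rw [row1, range_split ht1 hcase, List.map_append, List.map_cons]
      have hA : ∀ a ∈ (List.range (cls (S ++ [p]) p - 1)).map (fun i => minvC S (i + 1)),
          a < p.2 := by
        intro a ha
        rcases List.mem_map.1 ha with ⟨i, hi, rfl⟩
        have hi' := List.mem_range.1 hi
        exact F3 (i + 1) (by omega) (by omega)
      have he0 : cls (S ++ [p]) p - 1 + 1 = cls (S ++ [p]) p := by omega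
      have hins : rowInsert (row1 S) p.2
          = ((List.range (cls (S ++ [p]) p - 1)).map (fun i => minvC S (i + 1))
              ++ p.2 :: (List.range' (cls (S ++ [p]) p) (Tmax S - cls (S ++ [p]) p)).map
                   (fun i => minvC S (i + 1)),
             some (minvC S (cls (S ++ [p]) p - 1 + 1))) := by
        rw [hsplit]
        apply rowInsert_spec_some _ _ _ _ hA
        rw [he0]
        omega
      rw [rstep, hins]
      dsimp only
      rw [Prod.mk.injEq, Prod.mk.injEq]
      have hTm : Tmax (S ++ [p]) = Tmax S := by
        rw [Tmax_append hlt]; omega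
      have hclsnew : classList (S ++ [p]) (cls (S ++ [p]) p)
          = classList S (cls (S ++ [p]) p) ++ [p] := by
        rw [classList_append hlt, if_pos rfl]
      have hmvt : minvC (S ++ [p]) (cls (S ++ [p]) p) = p.2 := by
        rw [minvC, hclsnew, List.map_append]
        exact minL_append_right (fun x hx => by
          rcases List.mem_map.1 hx with ⟨q, hq, rfl⟩
          exact le_of_lt (F4 q (mem_classList.1 hq).1 (mem_classList.1 hq).2))
      have hmqt : minqC (S ++ [p]) (cls (S ++ [p]) p) = minqC S (cls (S ++ [p]) p) := by
        rw [minqC, hclsnew, List.map_append]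
        apply minL_append_left (fun h => hne (List.map_eq_nil_iff.1 h))
        have hm := minL_mem (fun h => hne (List.map_eq_nil_iff.1 h)
          : (classList S (cls (S ++ [p]) p)).map Prod.fst ≠ [])
        rcases List.mem_map.1 hm with ⟨q₀, hq₀, hq₀1⟩
        rw [← hq₀1]
        exact le_of_lt (hlt q₀ (mem_classList.1 hq₀).1)
      constructor
      · -- first rows agree
        show _ = row1 (S ++ [p])
        rw [row1, hTm, range_split ht1 hcase, List.map_append, List.map_cons]
        congr 1
        · apply List.map_congr_left
          intro i hi
          have hi' := List.mem_range.1 hi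
          exact ((hmvc (i + 1) (by omega)).1).symm
        · congr 1
          · rw [he0, hmvt]
          · apply List.map_congr_left
            intro i hi
            have hi' := List.mem_range'_1.1 hi
            exact ((hmvc (i + 1) (by omega)).1).symm
      constructor
      · -- recording rows agree
        show qrow1 S = qrow1 (S ++ [p])
        rw [qrow1, qrow1, hTm]
        apply List.map_congr_left
        intro i hi
        have hi' := List.mem_range.1 hi
        by_cases hit : i + 1 = cls (S ++ [p]) p
        · rw [hit, hmqt]
        · exact ((hmvc (i + 1) hit).2).symm
      · -- bump lists agree
        show bumpL S ++ [(p.1, minvC S (cls (S ++ [p]) p - 1 + 1))] = bumpL (S ++ [p])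
        rw [he0, bumpL, bumpL, List.filterMap_append]
        congr 1
        · exact (List.filterMap_congr (fun q hq => bumpF_append hlt hq)).symm
        · have hep : earlier (S ++ [p]) p = classList S (cls (S ++ [p]) p) := by
            rw [earlier, List.filter_append]
            have e1 : List.filter (fun r => decide (cls (S ++ [p]) r = cls (S ++ [p]) p)
                && decide (r.1 < p.1)) [p] = [] := by
              simp
            rw [e1, List.append_nil, classList]
            apply List.filter_congr
            intro q hq
            simp [cls_append (hlt q hq), hlt q hq]
          show [(p.1, minvC S (cls (S ++ [p]) p))] = List.filterMap (bumpF (S ++ [p])) [p]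
          have : bumpF (S ++ [p]) p = some (p.1, minvC S (cls (S ++ [p]) p)) := by
            rw [bumpF, hep, if_neg hne]
            rfl
          simp [this]
    · -- the new element starts a new class at the end of the row
      have heq : cls (S ++ [p]) p = Tmax S + 1 := by omega
      have hrow : ∀ a ∈ row1 S, a < p.2 := by
        intro a ha
        rcases List.mem_map.1 ha with ⟨i, hi, rfl⟩
        have hi' := List.mem_range.1 hi
        exact F3 (i + 1) (by omega) (by omega)
      have hins : rowInsert (row1 S) p.2 = (row1 S ++ [p.2], none) :=
        rowInsert_spec_none _ _ hrow
      rw [rstep, hins]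
      dsimp only
      rw [Prod.mk.injEq, Prod.mk.injEq]
      have hTm : Tmax (S ++ [p]) = Tmax S + 1 := by
        rw [Tmax_append hlt]; omega
      have hclsS : classList S (Tmax S + 1) = [] := by
        rw [List.eq_nil_iff_forall_not_mem]
        intro q hq
        have := cls_le_Tmax (mem_classList.1 hq).1
        have := (mem_classList.1 hq).2
        omega
      have hclsnew : classList (S ++ [p]) (Tmax S + 1) = [p] := by
        rw [classList_append hlt, if_pos heq, hclsS, List.nil_append]
      constructor
      · show row1 S ++ [p.2] = row1 (S ++ [p])
        rw [row1, row1, hTm, List.range_succ, List.map_append]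
        congr 1
        · apply List.map_congr_left
          intro i hi
          have hi' := List.mem_range.1 hi
          exact ((hmvc (i + 1) (by omega)).1).symm
        · show [p.2] = [minvC (S ++ [p]) (Tmax S + 1)]
          rw [minvC, hclsnew]
          simp [minL_singleton]
      constructor
      · show qrow1 S ++ [p.1] = qrow1 (S ++ [p])
        rw [qrow1, qrow1, hTm, List.range_succ, List.map_append]
        congr 1
        · apply List.map_congr_left
          intro i hi
          have hi' := List.mem_range.1 hi
          exact ((hmvc (i + 1) (by omega)).2).symm
        · show [p.1] = [minqC (S ++ [p]) (Tmax S + 1)]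
          rw [minqC, hclsnew]
          simp [minL_singleton]
      · show bumpL S = bumpL (S ++ [p])
        rw [bumpL, bumpL, List.filterMap_append]
        have e1 : List.filterMap (bumpF (S ++ [p])) [p] = [] := by
          have : bumpF (S ++ [p]) p = none := by
            rw [bumpF, if_pos]
            rw [List.eq_nil_iff_forall_not_mem]
            intro r hr
            rcases mem_earlier.1 hr with ⟨hrS, hrc, hr1⟩
            have hrS' : r ∈ S := by
              rcases List.mem_append.1 hrS with h | h
              · exact h
              · simp at h; subst h; omega
            rw [cls_append (hlt r hrS'), heq] at hrc
            have := cls_le_Tmax hrS'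
            omega
          simp [this]
        rw [e1, List.append_nil]
        exact (List.filterMap_congr (fun q hq => bumpF_append hlt hq)).symm


lemma rowInsert_none_eq {r r' : List ℕ} {x : ℕ} (h : rowInsert r x = (r', none)) :
    r' = r ++ [x] := by
  induction r generalizing r' with
  | nil =>
    rw [rowInsert] at h
    simp at h
    simp [h]
  | cons a t ih =>
    rw [rowInsert] at h
    by_cases ha : a < x
    · simp only [if_pos ha] at h
      rcases hri : rowInsert t x with ⟨t', o⟩
      rw [hri] at h
      cases o with
      | none =>
        have := ih hri
        simp at h
        simp [← h, this]
      | some y => simp at h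
    · simp only [if_neg ha] at h
      simp at h

lemma rowInsert_some_len {r r' : List ℕ} {x y : ℕ} (h : rowInsert r x = (r', some y)) :
    r'.length = r.length := by
  induction r generalizing r' y with
  | nil => rw [rowInsert] at h; simp at h
  | cons a t ih =>
    rw [rowInsert] at h
    by_cases ha : a < x
    · simp only [if_pos ha] at h
      rcases hri : rowInsert t x with ⟨t', o⟩
      rw [hri] at h
      cases o with
      | none => simp at h
      | some z =>
        simp at h
        have := ih (by rw [hri, h.2] : rowInsert t x = (t', some y))
        simp [← h.1, this]
    · simp only [if_neg ha] at h
      simp at h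
      simp [← h.1]

/-- RSK on a biword: insert second coordinates, record first coordinates. -/
def rsk (S : BW) : List (List ℕ) × List (List ℕ) :=
  S.foldl (fun pq p => RSKstep pq p.2 p.1) ([], [])

lemma rsk_append (S : BW) (p : ℕ × ℕ) : rsk (S ++ [p]) = RSKstep (rsk S) p.2 p.1 := by
  rw [rsk, List.foldl_append]
  rfl

lemma rowPass_append (S : BW) (p : ℕ × ℕ) : rowPass (S ++ [p]) = rstep (rowPass S) p := by
  rw [rowPass, List.foldl_append]
  rfl

theorem rsk_factor : ∀ S : BW, S ≠ [] →
    rsk S = ((rowPass S).1 :: (rsk (rowPass S).2.2).1,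
             (rowPass S).2.1 :: (rsk (rowPass S).2.2).2) := by
  intro S
  induction S using List.reverseRecOn with
  | nil => intro h; exact absurd rfl h
  | append_singleton S p ih =>
    intro _
    rcases eq_or_ne S [] with rfl | hS
    · rfl
    · rw [rsk_append, rowPass_append, ih hS]
      rcases hri : rowInsert (rowPass S).1 p.2 with ⟨r', o⟩
      cases o with
      | none =>
        have hr' : r' = (rowPass S).1 ++ [p.2] := rowInsert_none_eq hri
        have hit : insertTab ((rowPass S).1 :: (rsk (rowPass S).2.2).1) p.2
            = r' :: (rsk (rowPass S).2.2).1 := by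
          rw [insertTab, hri]
        rw [RSKstep]
        dsimp only
        rw [hit]
        have hdiff : diffRow (shape ((rowPass S).1 :: (rsk (rowPass S).2.2).1))
            (shape (r' :: (rsk (rowPass S).2.2).1)) = 0 := by
          have : r'.length = (rowPass S).1.length + 1 := by simp [hr']
          simp only [shape, List.map_cons, diffRow]
          rw [if_neg (by omega)]
        rw [hdiff]
        rw [rstep, hri]
        rfl
      | some y =>
        have hlen : r'.length = (rowPass S).1.length := rowInsert_some_len hri
        have hit : insertTab ((rowPass S).1 :: (rsk (rowPass S).2.2).1) p.2
            = r' :: insertTab (rsk (rowPass S).2.2).1 y := by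
          rw [insertTab, hri]
        rw [RSKstep]
        dsimp only
        rw [hit]
        have hdiff : diffRow (shape ((rowPass S).1 :: (rsk (rowPass S).2.2).1))
            (shape (r' :: insertTab (rsk (rowPass S).2.2).1 y))
            = diffRow (shape (rsk (rowPass S).2.2).1)
                (shape (insertTab (rsk (rowPass S).2.2).1 y)) + 1 := by
          simp only [shape, List.map_cons, diffRow]
          rw [if_pos hlen.symm]
        rw [hdiff]
        have hplace : placeAt ((rowPass S).2.1 :: (rsk (rowPass S).2.2).2)
            (diffRow (shape (rsk (rowPass S).2.2).1)
              (shape (insertTab (rsk (rowPass S).2.2).1 y)) + 1) p.1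
            = (rowPass S).2.1 :: placeAt (rsk (rowPass S).2.2).2
                (diffRow (shape (rsk (rowPass S).2.2).1)
                  (shape (insertTab (rsk (rowPass S).2.2).1 y))) p.1 := rfl
        rw [hplace]
        rw [rstep, hri]
        dsimp only
        rw [rsk_append]
        rfl


lemma map_swap_map_swap (S : BW) : (S.map Prod.swap).map Prod.swap = S := by
  rw [List.map_map]
  simp

section Inv

variable {S S' : BW}

lemma cls_inv (hperm : S'.Perm (S.map Prod.swap)) (q : ℕ × ℕ) :
    cls S' q = cls S q.swap := by
  rw [cls_perm hperm q]
  have := cls_swapmap S q.swap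
  rw [Prod.swap_swap] at this
  exact this

lemma mem_inv (hperm : S'.Perm (S.map Prod.swap)) {q : ℕ × ℕ} :
    q ∈ S' ↔ q.swap ∈ S := by
  rw [hperm.mem_iff]
  constructor
  · intro h
    rcases List.mem_map.1 h with ⟨a, ha, rfl⟩
    rwa [Prod.swap_swap]
  · intro h
    have := List.mem_map_of_mem (f := Prod.swap) h
    rwa [Prod.swap_swap] at this

lemma inv_symm (hperm : S'.Perm (S.map Prod.swap)) : S.Perm (S'.map Prod.swap) := by
  have := (hperm.map Prod.swap).symm
  rwa [map_swap_map_swap] at this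

lemma Tmax_inv (hperm : S'.Perm (S.map Prod.swap)) : Tmax S' = Tmax S := by
  rw [Tmax, Tmax]
  apply maxL_perm
  have e1 : (S.map Prod.swap).map (cls S') = S.map (cls S) := by
    rw [List.map_map]
    apply List.map_congr_left
    intro q _
    show cls S' q.swap = cls S q
    rw [cls_inv hperm, Prod.swap_swap]
  have := hperm.map (cls S')
  rwa [e1] at this

lemma classList_inv (hperm : S'.Perm (S.map Prod.swap)) (t : ℕ) :
    (classList S' t).Perm ((classList S t).map Prod.swap) := by
  have e1 : (S.map Prod.swap).filter (fun p => decide (cls S' p = t))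
      = (classList S t).map Prod.swap := by
    rw [List.filter_map, classList]
    congr 1
    apply List.filter_congr
    intro q _
    simp only [Function.comp_apply]
    rw [cls_inv hperm, Prod.swap_swap]
  have := hperm.filter (fun p => decide (cls S' p = t))
  rwa [e1] at this

lemma minvC_inv (hperm : S'.Perm (S.map Prod.swap)) {t : ℕ}
    (h1 : 1 ≤ t) (h2 : t ≤ Tmax S) : minvC S' t = minqC S t := by
  obtain ⟨q, hq, hc⟩ := class_nonempty h1 h2
  have hne : (classList S t).map Prod.fst ≠ [] := by
    intro h
    have : q ∈ classList S t := mem_classList.2 ⟨hq, hc⟩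
    rw [List.map_eq_nil_iff.1 h] at this
    exact absurd this (List.not_mem_nil)
  have hp : ((classList S' t).map Prod.snd).Perm ((classList S t).map Prod.fst) := by
    have e1 : ((classList S t).map Prod.swap).map Prod.snd = (classList S t).map Prod.fst := by
      rw [List.map_map]; rfl
    have := (classList_inv hperm t).map Prod.snd
    rwa [e1] at this
  rw [minvC, minqC]
  exact minL_perm hp (by
    intro h
    rw [h] at hp
    exact hne hp.symm.eq_nil)

lemma row1_inv (hperm : S'.Perm (S.map Prod.swap)) : row1 S' = qrow1 S := by
  rw [row1, qrow1, Tmax_inv hperm]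
  apply List.map_congr_left
  intro i hi
  have hi' := List.mem_range.1 hi
  exact minvC_inv hperm (by omega) (by omega)

lemma P2_of_inv (h1 : P1 S) (hperm : S'.Perm (S.map Prod.swap)) : P2 S' := by
  have hndS : (S.map Prod.fst).Nodup :=
    List.pairwise_map.2 (h1.imp (fun h => Nat.ne_of_lt h))
  have hp : (S'.map Prod.snd).Perm (S.map Prod.fst) := by
    have e1 : (S.map Prod.swap).map Prod.snd = S.map Prod.fst := by
      rw [List.map_map]; rfl
    have := hperm.map Prod.snd
    rwa [e1] at this
  have hnd : (S'.map Prod.snd).Nodup := hp.nodup_iff.2 hndS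
  exact List.pairwise_map.1 hnd

end Inv


section Bump

variable {S S' : BW}

lemma bumpF_fst {p q : ℕ × ℕ} (h : bumpF S p = some q) : q.1 = p.1 := by
  rw [bumpF] at h
  by_cases he : earlier S p = []
  · rw [if_pos he] at h; cases h
  · rw [if_neg he] at h
    cases h
    rfl

lemma P1_bumpL (h1 : P1 S) : P1 (bumpL S) := by
  rw [P1, bumpL, List.pairwise_filterMap]
  apply h1.imp_of_mem
  intro a b _ _ hab
  intro x hx y hy
  have hxa : x.1 = a.1 := bumpF_fst hx
  have hyb : y.1 = b.1 := bumpF_fst hy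
  omega

lemma nodup_of_P1 (h1 : P1 S) : S.Nodup :=
  h1.imp (fun h => by intro he; rw [he] at h; omega)

lemma bumpL_length_lt (h1 : P1 S) (hS : S ≠ []) : (bumpL S).length < S.length := by
  obtain ⟨q, t, rfl⟩ := List.exists_cons_of_ne_nil hS
  have hq : bumpF (q :: t) q = none := by
    rw [bumpF, if_pos]
    rw [List.eq_nil_iff_forall_not_mem]
    intro r hr
    rcases mem_earlier.1 hr with ⟨hrS, _, hr1⟩
    rcases List.mem_cons.1 hrS with rfl | hrt
    · omega
    · have := List.rel_of_pairwise_cons h1 hrt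
      omega
  rw [bumpL, List.filterMap_cons, hq]
  have := List.length_filterMap_le (bumpF (q :: t)) t
  simp only [List.length_cons]
  omega

/-- `p₁` and `p₂` are consecutive elements of the same class. -/
def Consec (S : BW) (p₁ p₂ : ℕ × ℕ) : Prop :=
  p₁ ∈ S ∧ p₂ ∈ S ∧ cls S p₁ = cls S p₂ ∧ p₁.1 < p₂.1 ∧
    ∀ p₃ ∈ S, cls S p₃ = cls S p₁ → ¬ (p₁.1 < p₃.1 ∧ p₃.1 < p₂.1)

lemma mem_bumpL_iff (h1 : P1 S) (h2 : P2 S) {x : ℕ × ℕ} :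
    x ∈ bumpL S ↔ ∃ p₁ p₂, Consec S p₁ p₂ ∧ x = (p₂.1, p₁.2) := by
  constructor
  · intro hx
    rcases List.mem_filterMap.1 hx with ⟨p, hp, hfp⟩
    rw [bumpF] at hfp
    by_cases he : earlier S p = []
    · rw [if_pos he] at hfp; cases hfp
    · rw [if_neg he] at hfp
      have hnem : (earlier S p).map Prod.snd ≠ [] := fun h => he (List.map_eq_nil_iff.1 h)
      obtain ⟨p₁, hp₁E, hp₁2⟩ := List.mem_map.1 (minL_mem hnem)
      rcases mem_earlier.1 hp₁E with ⟨hp₁S, hp₁c, hp₁1⟩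
      refine ⟨p₁, p, ⟨hp₁S, hp, by rw [hp₁c], hp₁1, ?_⟩, ?_⟩
      · intro p₃ hp₃ hc3 hbet
        have hp₃E : p₃ ∈ earlier S p := mem_earlier.2 ⟨hp₃, by rw [hc3, hp₁c], hbet.2⟩
        have h32 : p₃.2 < p₁.2 :=
          class_antitone h2 hp₁S hp₃ (by rw [hc3]) hbet.1
        have := minL_le (List.mem_map_of_mem (f := Prod.snd) hp₃E)
        omega
      · cases hfp
        rw [hp₁2]
  · rintro ⟨p₁, p₂, ⟨hp₁S, hp₂S, hc, hlt, hbet⟩, rfl⟩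
    apply List.mem_filterMap.2
    refine ⟨p₂, hp₂S, ?_⟩
    have hp₁E : p₁ ∈ earlier S p₂ := mem_earlier.2 ⟨hp₁S, hc, hlt⟩
    have he : earlier S p₂ ≠ [] := fun h => by
      rw [h] at hp₁E; exact absurd hp₁E (List.not_mem_nil)
    rw [bumpF, if_neg he]
    congr 1
    have hmin : minL ((earlier S p₂).map Prod.snd) = p₁.2 := by
      apply le_antisymm (minL_le (List.mem_map_of_mem (f := Prod.snd) hp₁E))
      apply le_minL (fun h => he (List.map_eq_nil_iff.1 h))
      intro v hv
      rcases List.mem_map.1 hv with ⟨q, hqE, rfl⟩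
      rcases mem_earlier.1 hqE with ⟨hqS, hqc, hq1⟩
      rcases Nat.lt_trichotomy q.1 p₁.1 with h | h | h
      · exact le_of_lt (class_antitone h2 hqS hp₁S (by rw [hqc, hc]) h)
      · rw [h1.eq_of_fst hqS hp₁S h]
      · exact absurd ⟨h, hq1⟩ (hbet q hqS (by rw [hqc, hc]))
    rw [hmin]

lemma consec_swap (h1 : P1 S) (h2 : P2 S) (hperm : S'.Perm (S.map Prod.swap))
    {p₁ p₂ : ℕ × ℕ} (hc : Consec S p₁ p₂) : Consec S' p₂.swap p₁.swap := by
  obtain ⟨hp₁S, hp₂S, hcls, hlt, hbet⟩ := hc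
  have hmem : ∀ q : ℕ × ℕ, q ∈ S' ↔ q.swap ∈ S := fun q => mem_inv hperm
  have hcls' : ∀ q : ℕ × ℕ, cls S' q = cls S q.swap := cls_inv hperm
  have hvlt : p₂.2 < p₁.2 := class_antitone h2 hp₁S hp₂S hcls hlt
  refine ⟨(hmem p₂.swap).2 (by rwa [Prod.swap_swap]),
          (hmem p₁.swap).2 (by rwa [Prod.swap_swap]), ?_, ?_, ?_⟩
  · rw [hcls' p₂.swap, hcls' p₁.swap, Prod.swap_swap, Prod.swap_swap, hcls]
  · exact hvlt
  · rintro p₃' hp₃' hc3 ⟨hb1, hb2⟩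
    set p₃ := p₃'.swap with hp₃def
    have hp₃S : p₃ ∈ S := (hmem p₃').1 hp₃'
    have hc3' : cls S p₃ = cls S p₁ := by
      have := hc3
      rw [hcls' p₃', hcls' p₂.swap, Prod.swap_swap] at this
      rw [this, hcls]
    have hb1' : p₂.2 < p₃.2 := hb1
    have hb2' : p₃.2 < p₁.2 := hb2
    -- locate p₃ in the first coordinate
    have h31 : p₁.1 < p₃.1 := by
      rcases Nat.lt_trichotomy p₃.1 p₁.1 with h | h | h
      · have := class_antitone h2 hp₃S hp₁S (by rw [hc3']) h
        omega
      · have := h1.eq_of_fst hp₃S hp₁S h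
        rw [this] at hb2'
        omega
      · exact h
    have h32 : p₃.1 < p₂.1 := by
      rcases Nat.lt_trichotomy p₂.1 p₃.1 with h | h | h
      · have := class_antitone h2 hp₂S hp₃S (by rw [hc3', hcls]) h
        omega
      · have := h1.eq_of_fst hp₂S hp₃S h
        rw [← this] at hb1'
        omega
      · exact h
    exact hbet p₃ hp₃S hc3' ⟨h31, h32⟩

lemma bumpL_inv (h1 : P1 S) (h2 : P2 S) (hperm : S'.Perm (S.map Prod.swap))
    (h1' : P1 S') : (bumpL S').Perm ((bumpL S).map Prod.swap) := by
  have h2' : P2 S' := P2_of_inv h1 hperm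
  have hperm' : S.Perm (S'.map Prod.swap) := inv_symm hperm
  have hnd1 : (bumpL S').Nodup := nodup_of_P1 (P1_bumpL h1')
  have hnd2 : ((bumpL S).map Prod.swap).Nodup :=
    (nodup_of_P1 (P1_bumpL h1)).map (fun a b hab => by
      have := congrArg Prod.swap hab
      rwa [Prod.swap_swap, Prod.swap_swap] at this)
  apply (List.perm_ext_iff_of_nodup hnd1 hnd2).2
  intro x
  have hx2 : x ∈ (bumpL S).map Prod.swap ↔ x.swap ∈ bumpL S := by
    constructor
    · intro h
      rcases List.mem_map.1 h with ⟨a, ha, rfl⟩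
      rwa [Prod.swap_swap]
    · intro h
      have := List.mem_map_of_mem (f := Prod.swap) h
      rwa [Prod.swap_swap] at this
  rw [hx2, mem_bumpL_iff h1' h2', mem_bumpL_iff h1 h2]
  constructor
  · rintro ⟨e₁, e₂, hc, rfl⟩
    refine ⟨e₂.swap, e₁.swap, consec_swap h1' h2' hperm' hc, ?_⟩
    rfl
  · rintro ⟨e₁, e₂, hc, hx⟩
    refine ⟨e₂.swap, e₁.swap, consec_swap h1 h2 hperm hc, ?_⟩
    have hxx : x = x.swap.swap := (Prod.swap_swap x).symm
    rw [hxx, hx]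
    rfl

lemma P2_bumpL (h1 : P1 S) (h2 : P2 S) (hperm : S'.Perm (S.map Prod.swap))
    (h1' : P1 S') : P2 (bumpL S) := by
  have hp : ((bumpL S).map Prod.snd).Perm ((bumpL S').map Prod.fst) := by
    have e1 : ((bumpL S').map Prod.swap).map Prod.snd = (bumpL S').map Prod.fst := by
      rw [List.map_map]; rfl
    have := ((bumpL_inv h1 h2 hperm h1').map Prod.swap)
    rw [map_swap_map_swap] at this
    have h2 := this.map Prod.snd
    rw [e1] at h2
    exact h2.symm
  have hnd : ((bumpL S).map Prod.snd).Nodup :=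
    hp.nodup_iff.2 (List.pairwise_map.2 ((P1_bumpL h1').imp (fun h => Nat.ne_of_lt h)))
  exact List.pairwise_map.1 hnd

end Bump


theorem rsk_symm : ∀ (N : ℕ) (S S' : BW), S.length ≤ N → P1 S → P2 S →
    S'.Perm (S.map Prod.swap) → P1 S' → (rsk S).2 = (rsk S').1 := by
  intro N
  induction N with
  | zero =>
    intro S S' hlen _ _ hperm _
    have hS : S = [] := List.length_eq_zero_iff.1 (by omega)
    subst hS
    have hS' : S' = [] := by
      have := hperm.length_eq
      simp at this
      exact this
    subst hS'
    rfl
  | succ N ihN =>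
    intro S S' hlen h1 h2 hperm h1'
    rcases eq_or_ne S [] with rfl | hS
    · have hS' : S' = [] := by
        have := hperm.length_eq
        simp at this
        exact this
      subst hS'
      rfl
    · have hS' : S' ≠ [] := by
        intro h
        subst h
        have := hperm.length_eq
        simp at this
        exact hS (List.length_eq_zero_iff.1 this.symm)
      have h2' : P2 S' := P2_of_inv h1 hperm
      rw [rsk_factor S hS, rsk_factor S' hS']
      rw [rowPass_eq S h1 h2, rowPass_eq S' h1' h2']
      dsimp only
      congr 1
      · exact (row1_inv hperm).symm
      · apply ihN (bumpL S) (bumpL S')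
        · have := bumpL_length_lt h1 hS
          omega
        · exact P1_bumpL h1
        · exact P2_bumpL h1 h2 hperm h1'
        · exact bumpL_inv h1 h2 hperm h1'
        · exact P1_bumpL h1'

lemma RSKfold_eq_rsk (xs : List ℕ) :
    RSKfold xs = rsk ((xs.zip (List.range xs.length)).map (fun p => (p.2 + 1, p.1))) := by
  rw [RSKfold, rsk, List.foldl_map]

/-- the biword of a permutation -/
def Lw {n : ℕ} (w : Equiv.Perm (Fin n)) : BW :=
  List.ofFn (fun i : Fin n => ((i : ℕ) + 1, (w i : ℕ) + 1))

lemma Lw_eq {n : ℕ} (w : Equiv.Perm (Fin n)) :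
    ((List.ofFn (fun i : Fin n => (w i : ℕ) + 1)).zip
        (List.range (List.ofFn (fun i : Fin n => (w i : ℕ) + 1)).length)).map
      (fun p => (p.2 + 1, p.1)) = Lw w := by
  apply List.ext_getElem
  · simp [Lw]
  · intro i hi1 hi2
    simp only [List.getElem_map, List.getElem_zip, List.getElem_range, Lw, List.getElem_ofFn]

lemma Ptab_eq {n : ℕ} (w : Equiv.Perm (Fin n)) : Ptab w = (rsk (Lw w)).1 := by
  rw [Ptab, RSKfold_eq_rsk, Lw_eq]

lemma Qtab_eq {n : ℕ} (w : Equiv.Perm (Fin n)) : Qtab w = (rsk (Lw w)).2 := by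
  rw [Qtab, RSKfold_eq_rsk, Lw_eq]

lemma P1_Lw {n : ℕ} (w : Equiv.Perm (Fin n)) : P1 (Lw w) := by
  rw [P1, Lw, List.pairwise_ofFn]
  intro i j hij
  simp only
  omega

lemma P2_Lw {n : ℕ} (w : Equiv.Perm (Fin n)) : P2 (Lw w) := by
  rw [P2, Lw, List.pairwise_ofFn]
  intro i j hij
  simp only
  intro h
  have : w i = w j := by
    have := Fin.val_eq_val (w i) (w j)
    omega
  exact absurd (w.injective this) (Fin.ne_of_lt hij)

lemma mem_Lw {n : ℕ} (w : Equiv.Perm (Fin n)) {x : ℕ × ℕ} :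
    x ∈ Lw w ↔ ∃ i : Fin n, x = ((i : ℕ) + 1, (w i : ℕ) + 1) := by
  rw [Lw, List.mem_ofFn]
  constructor
  · rintro ⟨i, rfl⟩
    exact ⟨i, rfl⟩
  · rintro ⟨i, rfl⟩
    exact ⟨i, rfl⟩

lemma Lw_inv_perm {n : ℕ} (w : Equiv.Perm (Fin n)) :
    (Lw w⁻¹).Perm ((Lw w).map Prod.swap) := by
  have hnd1 : (Lw w⁻¹).Nodup := nodup_of_P1 (P1_Lw w⁻¹)
  have hnd2 : ((Lw w).map Prod.swap).Nodup :=
    (nodup_of_P1 (P1_Lw w)).map (fun a b hab => by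
      have := congrArg Prod.swap hab
      rwa [Prod.swap_swap, Prod.swap_swap] at this)
  apply (List.perm_ext_iff_of_nodup hnd1 hnd2).2
  intro x
  have hx2 : x ∈ (Lw w).map Prod.swap ↔ x.swap ∈ Lw w := by
    constructor
    · intro h
      rcases List.mem_map.1 h with ⟨a, ha, rfl⟩
      rwa [Prod.swap_swap]
    · intro h
      have := List.mem_map_of_mem (f := Prod.swap) h
      rwa [Prod.swap_swap] at this
  rw [hx2, mem_Lw, mem_Lw]
  constructor
  · rintro ⟨i, rfl⟩
    refine ⟨w⁻¹ i, ?_⟩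
    have : w (w⁻¹ i) = i := w.apply_symm_apply i
    rw [this]
    rfl
  · rintro ⟨i, hi⟩
    refine ⟨w i, ?_⟩
    have : w⁻¹ (w i) = i := w.symm_apply_apply i
    rw [this]
    have : x = x.swap.swap := (Prod.swap_swap x).symm
    rw [this, hi]
    rfl

end RSKsym








/-- `Q(w) = P(w⁻¹)` and consequently `P(w) = Q(w⁻¹)`. -/
theorem Qtab_eq_Ptab_inv (n : ℕ) (w : Equiv.Perm (Fin n)) :
    Qtab w = Ptab w⁻¹ ∧ Ptab w = Qtab w⁻¹ := by
  have key : ∀ u : Equiv.Perm (Fin n), Qtab u = Ptab u⁻¹ := by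
    intro u
    rw [Qtab_eq, Ptab_eq]
    exact rsk_symm (Lw u).length (Lw u) (Lw u⁻¹) le_rfl (P1_Lw u) (P2_Lw u)
      (Lw_inv_perm u) (P1_Lw u⁻¹)
  refine ⟨key w, ?_⟩
  have := key w⁻¹
  rw [inv_inv] at this
  exact this.symm
end

section
/- Restriction property of RSK recording tableaux: let w ∈ S_n and 1 ≤ m ≤ n. Write w = d·z where z ∈ S_m (the subgroup fixing m+1,…,n) and d is the minimal length left coset representative of w in wS_m. Then the recording tableau Q(z) (computed in S_m) equals the subtableau of Q(w) obtained by removing the boxes containing m+1, m+2, …, n. -/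
lemma rowInsert_snd_mem : ∀ (r : List ℕ) (x y : ℕ), (rowInsert r x).2 = some y → y ∈ r := by
  intro r; induction r with
  | nil => intro x y h; simp [rowInsert] at h
  | cons a as ih =>
    intro x y h
    by_cases hax : a < x
    · simp only [rowInsert, if_pos hax] at h
      exact List.mem_cons_of_mem _ (ih x y h)
    · simp only [rowInsert, if_neg hax] at h
      simp only [Option.some.injEq] at h
      simp [h]

lemma rowInsert_fst_pred (P : ℕ → Prop) : ∀ (r : List ℕ) (x : ℕ),
    (∀ e ∈ r, P e) → P x → ∀ e ∈ (rowInsert r x).1, P e := by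
  intro r; induction r with
  | nil => intro x _ hx e he; simp [rowInsert] at he; simpa [he]
  | cons a as ih =>
    intro x hr hx e he
    by_cases hax : a < x
    · simp only [rowInsert, if_pos hax] at he
      rcases List.mem_cons.1 he with rfl | he
      · exact hr e (by simp)
      · exact ih x (fun e he => hr e (by simp [he])) hx e he
    · simp only [rowInsert, if_neg hax] at he
      rcases List.mem_cons.1 he with rfl | he
      · exact hx
      · exact hr e (by simp [he])

lemma insertTab_pred (P : ℕ → Prop) : ∀ (t : List (List ℕ)) (x : ℕ),
    (∀ e ∈ t.flatten, P e) → P x → ∀ e ∈ (insertTab t x).flatten, P e := by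
  intro t; induction t with
  | nil => intro x _ hx e he; simp [insertTab] at he; simpa [he]
  | cons r rest ih =>
    intro x ht hx e he
    have hr : ∀ e ∈ r, P e := fun e he => ht e (by simp [he])
    have hrest : ∀ e ∈ rest.flatten, P e := fun e he => ht e (by simp [he])
    rcases h : rowInsert r x with ⟨r1, o⟩
    cases o with
    | none =>
      simp only [insertTab, h] at he
      simp only [List.flatten_cons, List.mem_append] at he
      rcases he with he | he
      · exact rowInsert_fst_pred P r x hr hx e (by rw [h]; exact he)
      · exact hrest e he
    | some y =>
      have hy : P y := hr y (rowInsert_snd_mem r x y (by rw [h]))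
      simp only [insertTab, h] at he
      simp only [List.flatten_cons, List.mem_append] at he
      rcases he with he | he
      · exact rowInsert_fst_pred P r x hr hx e (by rw [h]; exact he)
      · exact ih y hrest hy e he

lemma rowInsert_map (g : ℕ → ℕ) (P : ℕ → Prop)
    (hg : ∀ a b, P a → P b → (a < b ↔ g a < g b)) :
    ∀ (r : List ℕ) (x : ℕ), (∀ e ∈ r, P e) → P x →
      rowInsert (r.map g) (g x) = ((rowInsert r x).1.map g, ((rowInsert r x).2).map g) := by
  intro r; induction r with
  | nil => intro x _ _; simp [rowInsert]
  | cons a as ih =>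
    intro x hr hx
    have ha : P a := hr a (by simp)
    have has : ∀ e ∈ as, P e := fun e he => hr e (by simp [he])
    by_cases h : a < x
    · have h' : g a < g x := (hg a x ha hx).1 h
      simp only [List.map_cons, rowInsert, if_pos h, if_pos h', ih x has hx]
    · have h' : ¬ g a < g x := fun hc => h ((hg a x ha hx).2 hc)
      simp [List.map_cons, rowInsert, if_neg h, if_neg h']

lemma insertTab_map (g : ℕ → ℕ) (P : ℕ → Prop)
    (hg : ∀ a b, P a → P b → (a < b ↔ g a < g b)) :
    ∀ (t : List (List ℕ)) (x : ℕ), (∀ e ∈ t.flatten, P e) → P x →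
      insertTab (t.map (List.map g)) (g x) = (insertTab t x).map (List.map g) := by
  intro t; induction t with
  | nil => intro x _ _; simp [insertTab]
  | cons r rest ih =>
    intro x ht hx
    have hr : ∀ e ∈ r, P e := fun e he => ht e (by simp [he])
    have hrest : ∀ e ∈ rest.flatten, P e := fun e he => ht e (by simp [he])
    have hrw := rowInsert_map g P hg r x hr hx
    rcases h : rowInsert r x with ⟨r1, o⟩
    rw [h] at hrw
    cases o with
    | none => simp only [insertTab, List.map_cons, hrw, h, Option.map_none]
    | some y =>
      have hy : P y := hr y (rowInsert_snd_mem r x y (by rw [h]))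
      simp only [insertTab, List.map_cons, hrw, h, Option.map_some]
      rw [ih y hrest hy]

lemma restrictTab_cons (r : List ℕ) (t : List (List ℕ)) (m : ℕ) :
    restrictTab (r :: t) m =
      if r.filter (· ≤ m) = [] then restrictTab t m
      else r.filter (· ≤ m) :: restrictTab t m := by
  by_cases h : r.filter (· ≤ m) = [] <;> simp [restrictTab, h]

lemma restrictTab_self (m : ℕ) : ∀ (q : List (List ℕ)),
    (∀ r ∈ q, r ≠ []) → (∀ e ∈ q.flatten, e ≤ m) → restrictTab q m = q := by
  intro q; induction q with
  | nil => intro _ _; simp [restrictTab]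
  | cons r t ih =>
    intro h1 h2
    have hr : r.filter (· ≤ m) = r :=
      List.filter_eq_self.2 (fun e he => by simp [h2 e (by simp [he])])
    rw [restrictTab_cons, hr, if_neg (h1 r (by simp)),
      ih (fun s hs => h1 s (by simp [hs])) (fun e he => h2 e (by simp [he]))]

lemma restrict_placeAt (m k : ℕ) (hk : m < k) :
    ∀ (q : List (List ℕ)) (r : ℕ), restrictTab (placeAt q r k) m = restrictTab q m := by
  intro q; induction q with
  | nil =>
    intro r
    have h1 : placeAt [] r k = [[k]] := by cases r <;> rfl
    rw [h1, restrictTab_cons]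
    simp [restrictTab, List.filter_cons, Nat.not_le.2 hk]
  | cons row qs ih =>
    intro r
    cases r with
    | zero =>
      show restrictTab ((row ++ [k]) :: qs) m = _
      rw [restrictTab_cons, restrictTab_cons]
      have : (row ++ [k]).filter (· ≤ m) = row.filter (· ≤ m) := by
        simp [List.filter_append, List.filter_cons, Nat.not_le.2 hk]
      rw [this]
    | succ r =>
      show restrictTab (row :: placeAt qs r k) m = _
      rw [restrictTab_cons, restrictTab_cons, ih r]

lemma placeAt_ne_nil : ∀ (q : List (List ℕ)) (r k : ℕ),
    (∀ row ∈ q, row ≠ []) → ∀ row ∈ placeAt q r k, row ≠ [] := by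
  intro q; induction q with
  | nil =>
    intro r k _ row hrow
    have h1 : placeAt [] r k = [[k]] := by cases r <;> rfl
    rw [h1] at hrow; simp at hrow; simp [hrow]
  | cons q qs ih =>
    intro r k h row hrow
    cases r with
    | zero =>
      rcases List.mem_cons.1 hrow with rfl | hrow
      · simp
      · exact h row (by simp [hrow])
    | succ r =>
      rcases List.mem_cons.1 hrow with rfl | hrow
      · exact h row (by simp)
      · exact ih r k (fun s hs => h s (by simp [hs])) row hrow

lemma placeAt_le (m : ℕ) : ∀ (q : List (List ℕ)) (r k : ℕ), k ≤ m →
    (∀ e ∈ q.flatten, e ≤ m) → ∀ e ∈ (placeAt q r k).flatten, e ≤ m := by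
  intro q; induction q with
  | nil =>
    intro r k hk _ e he
    have h1 : placeAt [] r k = [[k]] := by cases r <;> rfl
    rw [h1] at he; simp at he; simpa [he]
  | cons q qs ih =>
    intro r k hk h e he
    cases r with
    | zero =>
      simp only [placeAt, List.flatten_cons, List.mem_append] at he
      rcases he with he | he
      · rcases he with he | he
        · exact h e (by simp [he])
        · simp at he; simpa [he]
      · exact h e (by simp [he])
    | succ r =>
      simp only [placeAt, List.flatten_cons, List.mem_append] at he
      rcases he with he | he
      · exact h e (by simp [he])
      · exact ih r k hk (fun e' he' => h e' (by simp [he'])) e he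

lemma shape_map_map (g : ℕ → ℕ) (t : List (List ℕ)) :
    shape (t.map (List.map g)) = shape t := by
  simp [shape, List.map_map, Function.comp_def]

lemma fold_map (g : ℕ → ℕ) (P : ℕ → Prop)
    (hg : ∀ a b, P a → P b → (a < b ↔ g a < g b)) :
    ∀ (l : List (ℕ × ℕ)) (t q : List (List ℕ)),
      (∀ e ∈ t.flatten, P e) → (∀ p ∈ l, P p.1) →
      (l.map (fun p => (g p.1, p.2))).foldl (fun pq p => RSKstep pq p.1 (p.2 + 1))
          (t.map (List.map g), q)
        = ((l.foldl (fun pq p => RSKstep pq p.1 (p.2 + 1)) (t, q)).1.map (List.map g),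
           (l.foldl (fun pq p => RSKstep pq p.1 (p.2 + 1)) (t, q)).2) := by
  intro l; induction l with
  | nil => intro t q _ _; simp
  | cons x xs ih =>
    intro t q ht hl
    have hx : P x.1 := hl x (by simp)
    simp only [List.map_cons, List.foldl_cons]
    have hstep : RSKstep (t.map (List.map g), q) (g x.1) (x.2 + 1)
        = ((RSKstep (t, q) x.1 (x.2 + 1)).1.map (List.map g), (RSKstep (t, q) x.1 (x.2 + 1)).2) := by
      simp only [RSKstep]
      rw [insertTab_map g P hg t x.1 ht hx, shape_map_map, shape_map_map]
    rw [hstep]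
    have h2 : ((RSKstep (t, q) x.1 (x.2 + 1)).1, (RSKstep (t, q) x.1 (x.2 + 1)).2)
        = RSKstep (t, q) x.1 (x.2 + 1) := rfl
    have ht' : ∀ e ∈ (RSKstep (t, q) x.1 (x.2 + 1)).1.flatten, P e :=
      insertTab_pred P t x.1 ht hx
    have := ih (RSKstep (t, q) x.1 (x.2 + 1)).1 (RSKstep (t, q) x.1 (x.2 + 1)).2 ht'
      (fun p hp => hl p (by simp [hp]))
    rw [this, h2]

lemma restrict_fold (m : ℕ) :
    ∀ (l : List (ℕ × ℕ)) (pq : List (List ℕ) × List (List ℕ)), (∀ x ∈ l, m ≤ x.2) →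
      restrictTab ((l.foldl (fun pq p => RSKstep pq p.1 (p.2 + 1)) pq).2) m
        = restrictTab pq.2 m := by
  intro l; induction l with
  | nil => intro pq _; rfl
  | cons x xs ih =>
    intro pq hl
    have hx : m ≤ x.2 := hl x (by simp)
    rw [List.foldl_cons, ih _ (fun p hp => hl p (by simp [hp]))]
    show restrictTab (placeAt pq.2 _ (x.2 + 1)) m = _
    exact restrict_placeAt m (x.2 + 1) (by omega) _ _

lemma fold_q_inv (m : ℕ) :
    ∀ (l : List (ℕ × ℕ)) (pq : List (List ℕ) × List (List ℕ)),
      (∀ x ∈ l, x.2 + 1 ≤ m) → (∀ r ∈ pq.2, r ≠ []) → (∀ e ∈ pq.2.flatten, e ≤ m) →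
      (∀ r ∈ (l.foldl (fun pq p => RSKstep pq p.1 (p.2 + 1)) pq).2, r ≠ []) ∧
      (∀ e ∈ (l.foldl (fun pq p => RSKstep pq p.1 (p.2 + 1)) pq).2.flatten, e ≤ m) := by
  intro l; induction l with
  | nil => intro pq _ h1 h2; exact ⟨h1, h2⟩
  | cons x xs ih =>
    intro pq hl h1 h2
    rw [List.foldl_cons]
    refine ih _ (fun p hp => hl p (by simp [hp])) ?_ ?_
    · exact placeAt_ne_nil pq.2 _ (x.2 + 1) h1
    · exact placeAt_le m pq.2 _ (x.2 + 1) (hl x (by simp)) h2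

set_option maxHeartbeats 1000000 in
lemma swap_adj_lowers {n m : ℕ} (hmn : m ≤ n) (d : Equiv.Perm (Fin n))
    (i : ℕ) (hi : i + 1 < m)
    (hdesc : d ⟨i + 1, by omega⟩ < d ⟨i, by omega⟩) :
    invCount (d * Equiv.swap (⟨i, by omega⟩ : Fin n) ⟨i + 1, by omega⟩) < invCount d := by
  classical
  set a : Fin n := ⟨i, by omega⟩ with ha
  set b : Fin n := ⟨i + 1, by omega⟩ with hb
  have hab : a < b := by simp [ha, hb, Fin.lt_def]
  have hkey : ∀ p q : Fin n, p < q → ¬(p = a ∧ q = b) →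
      Equiv.swap a b p < Equiv.swap a b q := by
    intro p q hpq hne
    by_cases hpa : p = a
    · subst hpa
      by_cases hqb : q = b
      · exact absurd ⟨rfl, hqb⟩ hne
      · have hqa : q ≠ a := ne_of_gt hpq
        rw [Equiv.swap_apply_left, Equiv.swap_apply_of_ne_of_ne hqa hqb]
        have h1 : (a : ℕ) < (q : ℕ) := hpq
        have h2 : (q : ℕ) ≠ i + 1 := fun hc => hqb (Fin.ext hc)
        have h3 : (a : ℕ) = i := rfl
        rw [Fin.lt_def]
        show i + 1 < (q : ℕ)
        omega
    · by_cases hpb : p = b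
      · subst hpb
        have hqb : q ≠ b := ne_of_gt hpq
        have hqa : q ≠ a := ne_of_gt (lt_trans hab hpq)
        rw [Equiv.swap_apply_right, Equiv.swap_apply_of_ne_of_ne hqa hqb]
        exact lt_trans hab hpq
      · rw [Equiv.swap_apply_of_ne_of_ne hpa hpb]
        by_cases hqa : q = a
        · subst hqa
          rw [Equiv.swap_apply_left]
          exact lt_trans hpq hab
        · by_cases hqb : q = b
          · subst hqb
            rw [Equiv.swap_apply_right]
            have h1 : (p : ℕ) < i + 1 := hpq
            have h2 : (p : ℕ) ≠ i := fun hc => hpa (Fin.ext hc)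
            rw [Fin.lt_def]
            show (p : ℕ) < i
            omega
          · rw [Equiv.swap_apply_of_ne_of_ne hqa hqb]
            exact hpq
  unfold invCount
  set S₁ := Finset.univ.filter (fun p : Fin n × Fin n =>
    p.1 < p.2 ∧ (d * Equiv.swap a b) p.2 < (d * Equiv.swap a b) p.1) with hS₁
  set S₂ := Finset.univ.filter (fun p : Fin n × Fin n => p.1 < p.2 ∧ d p.2 < d p.1) with hS₂
  have habmem : (a, b) ∈ S₂ := by
    simp only [hS₂, Finset.mem_filter, Finset.mem_univ, true_and]
    exact ⟨hab, hdesc⟩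
  have hle : S₁.card ≤ (S₂.erase (a, b)).card := by
    apply Finset.card_le_card_of_injOn (fun p => (Equiv.swap a b p.1, Equiv.swap a b p.2))
    · intro p hp
      change p ∈ S₁ at hp
      rw [hS₁, Finset.mem_filter] at hp
      simp only [hS₁, Finset.mem_coe, Finset.mem_filter, Finset.mem_univ, true_and, Equiv.Perm.mul_apply] at hp
      obtain ⟨hp1, hp2⟩ := hp
      have hnab : ¬(p.1 = a ∧ p.2 = b) := by
        rintro ⟨h1, h2⟩
        rw [h1, h2, Equiv.swap_apply_left, Equiv.swap_apply_right] at hp2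
        exact absurd hp2 (asymm hdesc)
      refine Finset.mem_erase.2 ⟨?_, ?_⟩
      · intro hc
        have h1 : Equiv.swap a b p.1 = a := congrArg Prod.fst hc
        have h2 : Equiv.swap a b p.2 = b := congrArg Prod.snd hc
        have e1 : p.1 = b := by
          have := congrArg (Equiv.swap a b) h1
          rwa [Equiv.swap_apply_self, Equiv.swap_apply_left] at this
        have e2 : p.2 = a := by
          have := congrArg (Equiv.swap a b) h2
          rwa [Equiv.swap_apply_self, Equiv.swap_apply_right] at this
        rw [e1, e2] at hp1
        exact absurd (lt_trans hab hp1) (lt_irrefl a)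
      · simp only [hS₂, Finset.mem_filter, Finset.mem_univ, true_and]
        exact ⟨hkey p.1 p.2 hp1 hnab, hp2⟩
    · intro p _ q _ h
      have h1 := congrArg Prod.fst h
      have h2 := congrArg Prod.snd h
      simp only at h1 h2
      exact Prod.ext ((Equiv.swap a b).injective h1) ((Equiv.swap a b).injective h2)
  exact lt_of_le_of_lt hle (Finset.card_erase_lt_of_mem habmem)

lemma d_mono {n m : ℕ} (hmn : m ≤ n) (d : Equiv.Perm (Fin n))
    (hd : ∀ z' : Equiv.Perm (Fin n), (∀ i : Fin n, m ≤ (i : ℕ) → z' i = i) →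
      invCount d ≤ invCount (d * z')) :
    ∀ (jv : ℕ), jv < m → ∀ (iv : ℕ), iv < jv → ∀ (h1 : iv < n) (h2 : jv < n),
      d ⟨iv, h1⟩ < d ⟨jv, h2⟩ := by
  have hadj : ∀ (i : ℕ) (hi : i + 1 < m),
      d ⟨i, by omega⟩ < d ⟨i + 1, by omega⟩ := by
    intro i hi
    by_contra hcon
    have hne : d ⟨i, by omega⟩ ≠ d ⟨i + 1, by omega⟩ := by
      intro hc
      have := d.injective hc
      have : i = i + 1 := congrArg Fin.val this
      omega
    have hdesc : d ⟨i + 1, by omega⟩ < d ⟨i, by omega⟩ := by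
      rcases lt_trichotomy (d ⟨i + 1, by omega⟩) (d ⟨i, by omega⟩) with h | h | h
      · exact h
      · exact absurd h.symm hne
      · exact absurd h hcon
    have hlow := swap_adj_lowers hmn d i hi hdesc
    have hfix : ∀ k : Fin n, m ≤ (k : ℕ) →
        Equiv.swap (⟨i, by omega⟩ : Fin n) ⟨i + 1, by omega⟩ k = k := by
      intro k hk
      apply Equiv.swap_apply_of_ne_of_ne
      · intro hc
        have : (k : ℕ) = i := congrArg Fin.val hc
        omega
      · intro hc
        have : (k : ℕ) = i + 1 := congrArg Fin.val hc
        omega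
    exact absurd (hd _ hfix) (not_le.2 hlow)
  intro jv
  induction jv with
  | zero => omega
  | succ j ihj =>
    intro hj iv hij h1 h2
    rcases Nat.lt_or_ge iv j with h | h
    · have hjn : j < n := by omega
      exact lt_trans (ihj (by omega) iv h h1 hjn) (hadj j hj)
    · have : iv = j := by omega
      subst this
      exact hadj iv hj


/-- restriction property of RSK recording tableaux.  If `w = d·z` with
`z ∈ S_m` and `d` the minimal length representative of the coset `wS_m`, then
`Q(z)` (computed in `S_m`) is `Q(w)` with the boxes containing `m+1,…,n` removed. -/
theorem Qtab_restriction (n m : ℕ) (hm : 1 ≤ m) (hmn : m ≤ n)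
    (w d z : Equiv.Perm (Fin n))
    (hz : ∀ i : Fin n, m ≤ (i : ℕ) → z i = i)
    (hw : w = d * z)
    (hd : ∀ z' : Equiv.Perm (Fin n), (∀ i : Fin n, m ≤ (i : ℕ) → z' i = i) →
      invCount d ≤ invCount (d * z'))
    (zr : Equiv.Perm (Fin m))
    (hzr : ∀ (i : Fin n) (hi : (i : ℕ) < m), (z i : ℕ) = (zr ⟨i, hi⟩ : ℕ)) :
    Qtab zr = restrictTab (Qtab w) m := by
  subst hw
  classical
  have hdm := d_mono hmn d hd
  -- the relabeling function
  set g : ℕ → ℕ := fun t => if h : t - 1 < n then ((d ⟨t - 1, h⟩ : Fin n) : ℕ) + 1 else t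
    with hgdef
  have hgval : ∀ t, 1 ≤ t → t ≤ m → ∀ (h : t - 1 < n),
      g t = ((d ⟨t - 1, h⟩ : Fin n) : ℕ) + 1 := by
    intro t h1 h2 h
    simp only [hgdef]
    rw [dif_pos h]
  set P : ℕ → Prop := fun t => 1 ≤ t ∧ t ≤ m with hPdef
  have gmono : ∀ a b, P a → P b → a < b → g a < g b := by
    rintro a b ⟨ha1, ha2⟩ ⟨hb1, hb2⟩ hab
    have han : a - 1 < n := by omega
    have hbn : b - 1 < n := by omega
    rw [hgval a ha1 ha2 han, hgval b hb1 hb2 hbn]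
    have := hdm (b - 1) (by omega) (a - 1) (by omega) han hbn
    rw [Fin.lt_def] at this
    omega
  have hg : ∀ a b, P a → P b → (a < b ↔ g a < g b) := by
    intro a b ha hb
    constructor
    · exact gmono a b ha hb
    · intro h
      by_contra hc
      rcases lt_trichotomy a b with h' | h' | h'
      · exact hc h'
      · subst h'; exact lt_irrefl _ h
      · exact absurd h (asymm (gmono b a hb ha h'))
  -- the two zipped lists
  set lw := (List.ofFn (fun i : Fin n => (((d * z) i : Fin n) : ℕ) + 1)).zip (List.range n)
    with hlw
  set lz := (List.ofFn (fun i : Fin m => ((zr i : Fin m) : ℕ) + 1)).zip (List.range m)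
    with hlz
  have hQw : Qtab (d * z) =
      ((lw.foldl (fun pq p => RSKstep pq p.1 (p.2 + 1)) ([], [])).2) := by
    simp [Qtab, RSKfold, hlw]
  have hQz : Qtab zr =
      ((lz.foldl (fun pq p => RSKstep pq p.1 (p.2 + 1)) ([], [])).2) := by
    simp [Qtab, RSKfold, hlz]
  have hlwlen : lw.length = n := by simp [hlw]
  have hlzlen : lz.length = m := by simp [hlz]
  have htake : lw.take m = lz.map (fun p => (g p.1, p.2)) := by
    apply List.ext_getElem
    · simp [hlw, hlz]; omega
    · intro i h1 h2
      have him : i < m := by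
        rw [List.length_take, hlwlen] at h1; omega
      have hin : i < n := by omega
      simp only [hlw, hlz, List.getElem_take, List.getElem_map, List.getElem_zip,
        List.getElem_ofFn, List.getElem_range]
      have hzrlt : ((zr ⟨i, him⟩ : Fin m) : ℕ) < m := Fin.is_lt _
      have hgv := hgval (((zr ⟨i, him⟩ : Fin m) : ℕ) + 1) (by omega) (by omega) (by omega)
      simp only [Nat.add_sub_cancel] at hgv
      rw [Prod.mk.injEq]
      refine ⟨?_, rfl⟩
      rw [hgv]
      have hzi : z ⟨i, hin⟩ = ⟨((zr ⟨i, him⟩ : Fin m) : ℕ), by omega⟩ :=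
        Fin.ext (hzr ⟨i, hin⟩ him)
      rw [Equiv.Perm.mul_apply, hzi]
  have hdrop2 : ∀ x ∈ lw.drop m, m ≤ x.2 := by
    intro x hx
    obtain ⟨j, hj, rfl⟩ := List.mem_iff_getElem.1 hx
    rw [List.getElem_drop]
    have hmj : m + j < n := by
      rw [List.length_drop, hlwlen] at hj; omega
    simp only [hlw, List.getElem_zip, List.getElem_range]
    omega
  have hentries : ∀ p ∈ lz, P p.1 := by
    intro p hp
    have h1 : p.1 ∈ List.ofFn (fun i : Fin m => ((zr i : Fin m) : ℕ) + 1) :=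
      (List.of_mem_zip hp).1
    rw [List.mem_ofFn] at h1
    obtain ⟨i, hi⟩ := h1
    have hi' : ((zr i : Fin m) : ℕ) + 1 = p.1 := hi
    have hlt := Fin.is_lt (zr i)
    exact ⟨by omega, by omega⟩
  have hsecond : ∀ x ∈ lz, x.2 + 1 ≤ m := by
    intro x hx
    have h2 : x.2 ∈ List.range m := (List.of_mem_zip hx).2
    rw [List.mem_range] at h2
    omega
  -- split the fold
  have e1 : Qtab (d * z) =
      ((lw.drop m).foldl (fun pq p => RSKstep pq p.1 (p.2 + 1))
        ((lw.take m).foldl (fun pq p => RSKstep pq p.1 (p.2 + 1)) ([], []))).2 := by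
    rw [hQw, ← List.foldl_append, List.take_append_drop]
  have e3 : (lw.take m).foldl (fun pq p => RSKstep pq p.1 (p.2 + 1)) ([], [])
      = ((lz.foldl (fun pq p => RSKstep pq p.1 (p.2 + 1)) ([], [])).1.map (List.map g),
         (lz.foldl (fun pq p => RSKstep pq p.1 (p.2 + 1)) ([], [])).2) := by
    rw [htake]
    exact fold_map g P hg lz [] [] (by simp) hentries
  have e4 : restrictTab (Qtab (d * z)) m
      = restrictTab (lz.foldl (fun pq p => RSKstep pq p.1 (p.2 + 1)) ([], [])).2 m := by
    rw [e1, restrict_fold m _ _ hdrop2, e3]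
  have hinvq := fold_q_inv m lz ([], []) hsecond (by simp) (by simp)
  rw [e4, hQz]
  exact (restrictTab_self m _ hinvq.1 hinvq.2).symm
end
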